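/- Every ω-well-filtered T0 space whose sobrification is first-countable is sober. -/
import Mathlib

/-- A set is saturated if it is the intersection of all open sets containing it. -/
def IsSaturatedSet {X : Type*} [TopologicalSpace X] (A : Set X) : Prop :=
  A = ⋂₀ {U : Set X | IsOpen U ∧ A ⊆ U}

/-- `X` is ω-well-filtered: for every decreasing sequence of nonempty compact saturated
sets with intersection contained in an open `U`, some member is contained in `U`. -/
def OmegaWellFiltered (X : Type*) [TopologicalSpace X] : Prop :=
  ∀ K : ℕ → Set X, (∀ n, (K n).Nonempty ∧ IsCompact (K n) ∧ IsSaturatedSet (K n)) →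
    (∀ n, K (n + 1) ⊆ K n) → ∀ U : Set X, IsOpen U → (⋂ n, K n) ⊆ U → ∃ n, K n ⊆ U

/-- The points of the sobrification: irreducible closed subsets of `X`. -/
def IrrC (X : Type*) [TopologicalSpace X] := {A : Set X // IsIrreducible A ∧ IsClosed A}

/-- The topology of the sobrification `X^s`. -/
def sobTop (X : Type*) [TopologicalSpace X] : TopologicalSpace (IrrC X) :=
  TopologicalSpace.generateFrom
    {s : Set (IrrC X) | ∃ U : Set X, IsOpen U ∧ s = {F : IrrC X | (F.1 ∩ U).Nonempty}}

/-- The saturation of a set. -/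
def satur {X : Type*} [TopologicalSpace X] (S : Set X) : Set X :=
  ⋂₀ {U : Set X | IsOpen U ∧ S ⊆ U}

lemma subset_satur {X : Type*} [TopologicalSpace X] (S : Set X) : S ⊆ satur S := by
  intro x hx U hU
  exact hU.2 hx

lemma satur_subset {X : Type*} [TopologicalSpace X] {S U : Set X} (hU : IsOpen U)
    (h : S ⊆ U) : satur S ⊆ U := by
  intro x hx
  exact hx U ⟨hU, h⟩

lemma satur_mono {X : Type*} [TopologicalSpace X] {S T : Set X} (h : S ⊆ T) :
    satur S ⊆ satur T := by
  intro x hx U hU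
  exact hx U ⟨hU.1, h.trans hU.2⟩

lemma satur_saturated {X : Type*} [TopologicalSpace X] (S : Set X) :
    IsSaturatedSet (satur S) := by
  apply Set.Subset.antisymm
  · intro x hx U hU
    exact satur_subset hU.1 ((subset_satur S).trans hU.2) hx
  · intro x hx U hU
    exact hx U ⟨hU.1, fun y hy => hy U hU⟩

lemma satur_compact {X : Type*} [TopologicalSpace X] {S : Set X} (h : IsCompact S) :
    IsCompact (satur S) := by
  apply isCompact_of_finite_subcover
  intro ι U hUo hcov
  obtain ⟨t, ht⟩ := h.elim_finite_subcover U hUo ((subset_satur S).trans hcov)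
  exact ⟨t, satur_subset (isOpen_biUnion fun i _ => hUo i) ht⟩

/-- The diamond sets form a topological basis of the sobrification. -/
lemma sob_basis (X : Type*) [TopologicalSpace X] :
    @TopologicalSpace.IsTopologicalBasis (IrrC X) (sobTop X)
      {s : Set (IrrC X) | ∃ U : Set X, IsOpen U ∧ s = {F : IrrC X | (F.1 ∩ U).Nonempty}} := by
  letI := sobTop X
  refine ⟨?_, ?_, rfl⟩
  · rintro t₁ ⟨U, hU, rfl⟩ t₂ ⟨V, hV, rfl⟩ F ⟨h1, h2⟩
    refine ⟨{F : IrrC X | (F.1 ∩ (U ∩ V)).Nonempty}, ⟨U ∩ V, hU.inter hV, rfl⟩,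
      F.2.1.2 U V hU hV h1 h2, ?_⟩
    rintro G ⟨y, hyG, hyU, hyV⟩
    exact ⟨⟨y, hyG, hyU⟩, ⟨y, hyG, hyV⟩⟩
  · apply Set.eq_univ_of_forall
    intro F
    refine ⟨{F : IrrC X | (F.1 ∩ Set.univ).Nonempty}, ⟨Set.univ, isOpen_univ, rfl⟩, ?_⟩
    simp only [Set.inter_univ, Set.mem_setOf_eq]; exact F.2.1.1

/-- Every ω-well-filtered T0 space with first-countable sobrification is sober. -/
theorem stmt17 {X : Type*} [TopologicalSpace X] [T0Space X]
    (hwf : OmegaWellFiltered X)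
    (h : @FirstCountableTopology (IrrC X) (sobTop X)) :
    ∀ A : Set X, IsIrreducible A → IsClosed A → ∃! x : X, A = closure {x} := by
  letI := sobTop X
  haveI := h
  intro A hA hAc
  set FA : IrrC X := ⟨A, hA, hAc⟩ with hFA
  obtain ⟨s, hs⟩ := (nhds FA).exists_antitone_basis
  -- For each n, find an open W n with FA ∈ ◇(W n) ⊆ s n
  have hW : ∀ n : ℕ, ∃ W : Set X, IsOpen W ∧ (A ∩ W).Nonempty ∧
      {F : IrrC X | (F.1 ∩ W).Nonempty} ⊆ s n := by
    intro n
    have hsn : s n ∈ nhds FA := hs.mem n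
    obtain ⟨t, ⟨U, hU, rfl⟩, hFt, hts⟩ :=
      (sob_basis X).mem_nhds_iff.mp hsn
    exact ⟨U, hU, hFt, hts⟩
  choose W hWo hWA hWs using hW
  -- V n : decreasing finite intersections of the W's
  let V : ℕ → Set X := fun n => Nat.rec (W 0) (fun k Vk => Vk ∩ W (k + 1)) n
  have hVsucc : ∀ n, V (n + 1) = V n ∩ W (n + 1) := fun n => rfl
  have hVo : ∀ n, IsOpen (V n) := by
    intro n
    induction n with
    | zero => exact hWo 0
    | succ k ih => exact ih.inter (hWo (k + 1))
  have hVA : ∀ n, (A ∩ V n).Nonempty := by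
    intro n
    induction n with
    | zero => exact hWA 0
    | succ k ih => exact hA.2 (V k) (W (k + 1)) (hVo k) (hWo (k + 1)) ih (hWA (k + 1))
  have hVW : ∀ n, V n ⊆ W n := by
    intro n
    cases n with
    | zero => exact fun x hx => hx
    | succ k => exact Set.inter_subset_right
  have hVmono : ∀ m n, m ≤ n → V n ⊆ V m := by
    intro m n hmn
    induction n with
    | zero => simp [Nat.le_zero.mp hmn]
    | succ k ih =>
      rcases Nat.lt_or_ge m (k + 1) with hk | hk
      · exact (Set.inter_subset_left).trans (ih (Nat.lt_succ_iff.mp hk))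
      · have : m = k + 1 := le_antisymm hmn hk
        subst this; exact Set.Subset.rfl
  -- key: every open set meeting A contains some V n
  have hkey : ∀ U : Set X, IsOpen U → (A ∩ U).Nonempty → ∃ n, V n ⊆ U := by
    intro U hU hAU
    have hdU : IsOpen {F : IrrC X | (F.1 ∩ U).Nonempty} :=
      (sob_basis X).isOpen ⟨U, hU, rfl⟩
    have hmem : {F : IrrC X | (F.1 ∩ U).Nonempty} ∈ nhds FA :=
      hdU.mem_nhds hAU
    obtain ⟨n, -, hsub⟩ := hs.toHasBasis.mem_iff.mp hmem
    refine ⟨n, fun z hz => ?_⟩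
    have hzW : z ∈ W n := hVW n hz
    set Fz : IrrC X := ⟨closure {z}, isIrreducible_singleton.closure, isClosed_closure⟩
    have hFzW : Fz ∈ {F : IrrC X | (F.1 ∩ W n).Nonempty} :=
      ⟨z, subset_closure rfl, hzW⟩
    have hFzU : (closure {z} ∩ U).Nonempty := hsub (hWs n hFzW)
    obtain ⟨y, hyc, hyU⟩ := hFzU
    obtain ⟨w, hwU, hw⟩ := mem_closure_iff.mp hyc U hU hyU
    rwa [show w = z from hw] at hwU
  -- choose points x n ∈ A ∩ V n
  choose x hx using hVA
  -- tail property
  have htail : ∀ U : Set X, IsOpen U → (A ∩ U).Nonempty → ∃ N, ∀ j, N ≤ j → x j ∈ U := by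
    intro U hU hAU
    obtain ⟨n, hn⟩ := hkey U hU hAU
    exact ⟨n, fun j hj => hn (hVmono n j hj (hx j).2)⟩
  -- the tail sets and their saturations
  set T : ℕ → Set X := fun n => x '' {k | n ≤ k} with hT
  have hTcomp : ∀ n, IsCompact (T n) := by
    intro n
    apply isCompact_of_finite_subcover
    intro ι U hUo hcov
    classical
    have hxn : x n ∈ ⋃ i, U i := hcov ⟨n, le_refl n, rfl⟩
    obtain ⟨i0, hi0⟩ := Set.mem_iUnion.mp hxn
    obtain ⟨N, hN⟩ := htail (U i0) (hUo i0) ⟨x n, (hx n).1, hi0⟩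
    have hmem : ∀ k, ∃ i, (n ≤ k → x k ∈ U i) := by
      intro k
      by_cases hk : n ≤ k
      · obtain ⟨i, hi⟩ := Set.mem_iUnion.mp (hcov ⟨k, hk, rfl⟩)
        exact ⟨i, fun _ => hi⟩
      · exact ⟨i0, fun hkn => absurd hkn hk⟩
    choose g hg using hmem
    refine ⟨insert i0 ((Finset.Ico n N).image g), ?_⟩
    rintro y ⟨k, hk, rfl⟩
    rcases le_or_gt N k with hNk | hNk
    · exact Set.mem_biUnion (Finset.mem_insert_self i0 _) (hN k hNk)
    · exact Set.mem_biUnion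
        (Finset.mem_insert_of_mem (Finset.mem_image_of_mem g (Finset.mem_Ico.mpr ⟨hk, hNk⟩)))
        (hg k hk)
  set K : ℕ → Set X := fun n => satur (T n) with hK
  have hKprop : ∀ n, (K n).Nonempty ∧ IsCompact (K n) ∧ IsSaturatedSet (K n) := by
    intro n
    exact ⟨⟨x n, subset_satur _ ⟨n, le_refl n, rfl⟩⟩, satur_compact (hTcomp n),
      satur_saturated _⟩
  have hKdec : ∀ n, K (n + 1) ⊆ K n := by
    intro n
    apply satur_mono
    exact Set.image_mono fun k hk => le_of_lt (Nat.lt_of_succ_le hk)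
  -- apply ω-well-filteredness with U = Aᶜ
  have hnot : ¬ (⋂ n, K n) ⊆ Aᶜ := by
    intro hsub
    obtain ⟨n, hn⟩ := hwf K hKprop hKdec Aᶜ hAc.isOpen_compl hsub
    exact hn (subset_satur _ ⟨n, le_refl n, rfl⟩) (hx n).1
  obtain ⟨x0, hx0K, hx0c⟩ := Set.not_subset.mp hnot
  have hx0A : x0 ∈ A := Set.notMem_compl_iff.mp hx0c
  have hAsub : A ⊆ closure {x0} := by
    intro a ha
    rw [mem_closure_iff]
    intro o ho hao
    obtain ⟨n, hn⟩ := hkey o ho ⟨a, ha, hao⟩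
    have hTn : T n ⊆ o := by
      rintro y ⟨k, hk, rfl⟩
      exact hn (hVmono n k hk (hx k).2)
    have : x0 ∈ o := satur_subset ho hTn (Set.mem_iInter.mp hx0K n)
    exact ⟨x0, this, rfl⟩
  have hEq : A = closure {x0} :=
    Set.Subset.antisymm hAsub (closure_minimal (Set.singleton_subset_iff.mpr hx0A) hAc)
  refine ⟨x0, hEq, fun y hy => ?_⟩
  have : closure ({y} : Set X) = closure ({x0} : Set X) := hy.symm.trans hEq
  exact ((inseparable_iff_closure_eq).mpr this).eq
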